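/- Let (G, F_•G, 𝔯) be a filtered Rota-Baxter group: (G, F_•G) is a filtered group and 𝔯 is a Rota-Baxter operator on G with 𝔯(FₙG) ⊆ FₙG for all n. Then for each n ≥ 1 the map 𝔯ₙ on grₙG = FₙG/Fₙ₊₁G defined by 𝔯ₙ(x̄) = 𝔯(x)‾ is well defined and is an endomorphism of the abelian group grₙG. -/

import Mathlib

/-- for a filtered Rota-Baxter group `(G, F_•G, 𝔯)`, the induced map
`𝔯ₙ(x̄) = 𝔯(x)‾` on `grₙG = FₙG/Fₙ₊₁G` is well defined (if `x ≡ x'` mod `Fₙ₊₁G` then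
`𝔯(x) ≡ 𝔯(x')`) and additive (`𝔯(xy) ≡ 𝔯(x)𝔯(y)` mod `Fₙ₊₁G`), i.e. it is an
endomorphism of the abelian group `grₙG`. -/
theorem stmt15 {G : Type*} [Group G] (F : ℕ → Subgroup G) (R : G → G)
    (hF1 : F 1 = ⊤)
    (hdesc : ∀ n, 1 ≤ n → F (n + 1) ≤ F n)
    (hcomm : ∀ n m, 1 ≤ n → 1 ≤ m → ⁅F n, F m⁆ ≤ F (n + m))
    (hRB : ∀ g h : G, R g * R h = R (g * R g * h * (R g)⁻¹))
    (hRF : ∀ n, 1 ≤ n → ∀ x ∈ F n, R x ∈ F n) :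
    ∀ n, 1 ≤ n →
      (∀ x ∈ F n, ∀ x' ∈ F n, x⁻¹ * x' ∈ F (n + 1) → (R x)⁻¹ * R x' ∈ F (n + 1)) ∧
      (∀ x ∈ F n, ∀ y ∈ F n, (R (x * y))⁻¹ * (R x * R y) ∈ F (n + 1)) := by
  -- monotonicity of the filtration
  have hmono : ∀ k m : ℕ, 1 ≤ k → k ≤ m → F m ≤ F k := by
    intro k m hk hkm
    induction m with
    | zero => omega
    | succ m ih =>
      rcases Nat.lt_or_ge k (m + 1) with h | h
      · exact (hdesc m (by omega)).trans (ih (by omega))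
      · have : k = m + 1 := by omega
        rw [this]
  intro n hn
  have hWD : ∀ x ∈ F n, ∀ x' ∈ F n, x⁻¹ * x' ∈ F (n + 1) →
      (R x)⁻¹ * R x' ∈ F (n + 1) := by
    intro x hx x' hx' hc
    have hRx : R x ∈ F n := hRF n hn x hx
    -- conjugate of c := x⁻¹ * x' by (R x)⁻¹ lies in F (n+1)
    open scoped commutatorElement in
    have hcomm1 : ⁅(R x)⁻¹, x⁻¹ * x'⁆ ∈ F (n + (n + 1)) :=
      hcomm n (n + 1) hn (by omega)
        (Subgroup.commutator_mem_commutator (inv_mem hRx) hc)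
    have hconj : (R x)⁻¹ * (x⁻¹ * x') * R x ∈ F (n + 1) := by
      open scoped commutatorElement in
      have h1 : (R x)⁻¹ * (x⁻¹ * x') * R x = ⁅(R x)⁻¹, x⁻¹ * x'⁆ * (x⁻¹ * x') := by
        simp only [commutatorElement_def]; group
      rw [h1]
      exact mul_mem (hmono (n + 1) (n + (n + 1)) (by omega) (by omega) hcomm1) hc
    have key : R x * R ((R x)⁻¹ * (x⁻¹ * x') * R x) = R x' := by
      rw [hRB]
      congr 1
      group
    have : (R x)⁻¹ * R x' = R ((R x)⁻¹ * (x⁻¹ * x') * R x) := by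
      rw [← key]; group
    rw [this]
    exact hRF (n + 1) (by omega) _ hconj
  refine ⟨hWD, ?_⟩
  intro x hx y hy
  have hRx : R x ∈ F n := hRF n hn x hx
  -- c := y⁻¹ * (R x * y * (R x)⁻¹) is a commutator in F (n+n) ⊆ F (n+1)
  have hc : y⁻¹ * (R x * y * (R x)⁻¹) ∈ F (n + 1) := by
    open scoped commutatorElement in
    have h1 : y⁻¹ * (R x * y * (R x)⁻¹) = ⁅y⁻¹, R x⁆ := by
      simp only [commutatorElement_def]; group
    rw [h1]
    exact hmono (n + 1) (n + n) (by omega) (by omega)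
      (hcomm n n hn hn (Subgroup.commutator_mem_commutator (inv_mem hy) hRx))
  have hxy : x * y ∈ F n := mul_mem hx hy
  have hxyc : x * R x * y * (R x)⁻¹ ∈ F n := by
    have h2 : x * R x * y * (R x)⁻¹ = (x * y) * (y⁻¹ * (R x * y * (R x)⁻¹)) := by
      group
    rw [h2]
    exact mul_mem hxy (hmono n (n + 1) hn (by omega) hc)
  have hdiff : (x * y)⁻¹ * (x * R x * y * (R x)⁻¹) ∈ F (n + 1) := by
    have h3 : (x * y)⁻¹ * (x * R x * y * (R x)⁻¹) = y⁻¹ * (R x * y * (R x)⁻¹) := by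
      group
    rw [h3]; exact hc
  have := hWD (x * y) hxy (x * R x * y * (R x)⁻¹) hxyc hdiff
  rwa [← hRB x y] at this
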